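/- Let (ζ_i)_{i≥1} be any sequence in [0,1) and (γ_i)_{i≥1} any sequence in (1,∞). Set M_i := M(ζ_i,γ_i) and define the row vectors (L̃_1, R̃_1) := (1,1) and (L̃_k, R̃_k) := (1,1)·M_1·M_2⋯M_{k−1} for k ≥ 2. Then for every k ≥ 2 one has L̃_k > R̃_k > 0 and L̃_{k+1} + R̃_{k+1} > L̃_k + R̃_k. -/
import Mathlib


open Matrix Filter

/-- The transfer matrix `M(ζ,γ) = (1/((1+ζ)γ)) · [[γ², ζγ²],[ζ, 1]]`. -/
noncomputable def Mmat (ζ γ : ℝ) : Matrix (Fin 2) (Fin 2) ℝ :=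
  (((1 + ζ) * γ)⁻¹) • !![γ ^ 2, ζ * γ ^ 2; ζ, 1]

/-- The forward product `M_1 · M_2 ⋯ M_{k-1}`. -/
noncomputable def forwardProd (ζ γ : ℕ → ℝ) (k : ℕ) : Matrix (Fin 2) (Fin 2) ℝ :=
  ((List.range (k - 1)).map (fun i => Mmat (ζ (i + 1)) (γ (i + 1)))).prod

/-- `L̃_k` : first entry of the row vector `(1,1) · M_1 ⋯ M_{k-1}`. -/
noncomputable def Ltil (ζ γ : ℕ → ℝ) (k : ℕ) : ℝ :=
  Matrix.vecMul ![1, 1] (forwardProd ζ γ k) 0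

/-- `R̃_k` : second entry of the row vector `(1,1) · M_1 ⋯ M_{k-1}`. -/
noncomputable def Rtil (ζ γ : ℕ → ℝ) (k : ℕ) : ℝ :=
  Matrix.vecMul ![1, 1] (forwardProd ζ γ k) 1

lemma fp_succ (ζ γ : ℕ → ℝ) (k : ℕ) (hk : 1 ≤ k) :
    forwardProd ζ γ (k + 1) = forwardProd ζ γ k * Mmat (ζ k) (γ k) := by
  unfold forwardProd
  have h : k + 1 - 1 = (k - 1) + 1 := by omega
  rw [h, List.range_succ, List.map_append, List.prod_append]
  have h2 : k - 1 + 1 = k := by omega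
  simp [h2]

lemma Ltil_succ (ζ γ : ℕ → ℝ) (k : ℕ) (hk : 1 ≤ k) :
    Ltil ζ γ (k + 1)
      = (((1 + ζ k) * γ k)⁻¹) * (Ltil ζ γ k * γ k ^ 2 + Rtil ζ γ k * ζ k) := by
  unfold Ltil Rtil
  rw [fp_succ ζ γ k hk, ← Matrix.vecMul_vecMul]
  simp [Mmat, Matrix.vecMul, dotProduct, Fin.sum_univ_two]
  ring

lemma Rtil_succ (ζ γ : ℕ → ℝ) (k : ℕ) (hk : 1 ≤ k) :
    Rtil ζ γ (k + 1)
      = (((1 + ζ k) * γ k)⁻¹) * (Ltil ζ γ k * (ζ k * γ k ^ 2) + Rtil ζ γ k) := by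
  unfold Ltil Rtil
  rw [fp_succ ζ γ k hk, ← Matrix.vecMul_vecMul]
  simp [Mmat, Matrix.vecMul, dotProduct, Fin.sum_univ_two]
  ring


/-- For any sequences `(ζ_i)_{i≥1} ⊆ [0,1)` and `(γ_i)_{i≥1} ⊆ (1,∞)`, the row vectors
`(L̃_k, R̃_k) = (1,1)·M_1⋯M_{k-1}` satisfy `L̃_k > R̃_k > 0` and
`L̃_{k+1} + R̃_{k+1} > L̃_k + R̃_k` for all `k ≥ 2`. -/
theorem stmt0 (ζ γ : ℕ → ℝ)
    (hζ : ∀ i, 1 ≤ i → 0 ≤ ζ i ∧ ζ i < 1)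
    (hγ : ∀ i, 1 ≤ i → 1 < γ i) :
    ∀ k, 2 ≤ k →
      Ltil ζ γ k > Rtil ζ γ k ∧ Rtil ζ γ k > 0 ∧
      Ltil ζ γ (k + 1) + Rtil ζ γ (k + 1) > Ltil ζ γ k + Rtil ζ γ k := by
  -- key one-step lemma
  have key : ∀ k, 1 ≤ k → Rtil ζ γ k > 0 → Ltil ζ γ k ≥ Rtil ζ γ k →
      Ltil ζ γ (k + 1) > Rtil ζ γ (k + 1) ∧ Rtil ζ γ (k + 1) > 0 ∧
      Ltil ζ γ (k + 1) + Rtil ζ γ (k + 1) > Ltil ζ γ k + Rtil ζ γ k := by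
    intro k hk hR hLR
    obtain ⟨hζ0, hζ1⟩ := hζ k hk
    have hγk := hγ k hk
    have hγ0 : (0:ℝ) < γ k := by linarith
    have hc : (0:ℝ) < (1 + ζ k) * γ k := by nlinarith
    have hci : (0:ℝ) < ((1 + ζ k) * γ k)⁻¹ := inv_pos.mpr hc
    rw [Ltil_succ ζ γ k hk, Rtil_succ ζ γ k hk]
    set L := Ltil ζ γ k
    set R := Rtil ζ γ k
    have hL : 0 < L := lt_of_lt_of_le hR hLR
    refine ⟨?_, ?_, ?_⟩
    · apply mul_lt_mul_of_pos_left _ hci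
      have hγ2 : 1 < γ k ^ 2 := by nlinarith
      have hx : 0 < L * γ k ^ 2 - R := by nlinarith
      nlinarith [mul_pos (show (0:ℝ) < 1 - ζ k by linarith) hx]
    · positivity
    · have hz : (1 + ζ k) ≠ 0 := by nlinarith
      have hγne : γ k ≠ 0 := ne_of_gt hγ0
      have h1 : ((1 + ζ k) * γ k)⁻¹ * (L * γ k ^ 2 + R * ζ k)
          + ((1 + ζ k) * γ k)⁻¹ * (L * (ζ k * γ k ^ 2) + R)
          = (L * γ k ^ 2 + R) / γ k := by
        field_simp
        ring
      rw [h1, gt_iff_lt, lt_div_iff₀ hγ0]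
      nlinarith [mul_pos (show (0:ℝ) < γ k - 1 by linarith)
        (show (0:ℝ) < L * γ k - R by nlinarith)]
  -- base invariant
  have inv : ∀ k, 1 ≤ k → Rtil ζ γ k > 0 ∧ Ltil ζ γ k ≥ Rtil ζ γ k := by
    intro k hk
    induction k with
    | zero => omega
    | succ n ih =>
      rcases Nat.eq_or_lt_of_le hk with h | h
      · have h1 : n = 0 := by omega
        subst h1
        simp [Ltil, Rtil, forwardProd, Matrix.vecMul, dotProduct]
      · have hn : 1 ≤ n := by omega
        obtain ⟨hR, hLR⟩ := ih hn
        obtain ⟨a, b, _⟩ := key n hn hR hLR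
        exact ⟨b, le_of_lt a⟩
  intro k hk
  have hk1 : 1 ≤ k - 1 := by omega
  obtain ⟨hR', hLR'⟩ := inv (k - 1) hk1
  have hkk : k - 1 + 1 = k := by omega
  obtain ⟨h1, h2, _⟩ := key (k - 1) hk1 hR' hLR'
  rw [hkk] at h1 h2
  obtain ⟨hR, hLR⟩ := inv k (by omega)
  obtain ⟨_, _, h3⟩ := key k (by omega) hR hLR
  exact ⟨h1, h2, h3⟩
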